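/- Let C be an [n,k,d]-linear code over F with basis B = (a₁,…,a_k) such that every aⱼ has weight u, wt(Σⱼ aⱼ) = d, and u ≥ d(1 + 1/k) (i.e. C is u-bounded relative to B). Then the code Code(B) spanned by the cyclic-shift vectors a′₁,…,a′_{k+1} has minimum distance exactly (k+1)d. -/
import Mathlib

open scoped Classical in
noncomputable def wt {F : Type*} [Field F] {m : ℕ} (v : Fin m → F) : ℕ :=
  (Finset.univ.filter fun p => v p ≠ 0).card

/-- `d` is the minimum distance of the linear code `C`. -/
noncomputable def IsMinDist {F : Type*} [Field F] {m : ℕ} (C : Submodule F (Fin m → F)) (d : ℕ) : Prop :=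
  (∀ w ∈ C, w ≠ 0 → d ≤ wt w) ∧ ∃ w ∈ C, w ≠ 0 ∧ wt w = d

/-- The cyclic-shift vectors of Construction 3.2: `shiftVec n k a t` is the vector in
`F^{(k+1)n}` whose `(k+1)` blocks of size `n` are zero in block `t` and the vectors
`a 0, ..., a (k-1)` read cyclically in the remaining blocks. -/
def shiftVec {F : Type*} [Field F] (n k : ℕ) (a : Fin k → Fin n → F) (t : Fin (k + 1)) :
    Fin ((k + 1) * n) → F :=
  fun p =>
    if h : p.val / n = t.val then 0
    else
      have hn : 0 < n := by
        rcases Nat.eq_zero_or_pos n with h0 | h0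
        · exact absurd p.isLt (by simp [h0])
        · exact h0
      have hi : p.val / n < k + 1 :=
        Nat.div_lt_of_lt_mul (Nat.mul_comm (k + 1) n ▸ p.isLt)
      a ⟨(if t.val ≤ p.val / n then p.val / n - t.val else p.val / n + (k + 1) - t.val) - 1,
          by
            have ht := t.isLt
            generalize hq : p.val / n = q at h hi ⊢
            split_ifs with h2 <;> omega⟩
        ⟨p.val % n, Nat.mod_lt _ hn⟩

/-- `C = span a` is `u`-bounded relative to the ordered basis `a`, with minimum distance `d`:
all basis vectors have weight `u`, their sum has weight `d`, and `u ≥ d(1 + 1/k)`. -/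
noncomputable def UBounded {F : Type*} [Field F] {n k : ℕ} (a : Fin k → Fin n → F)
    (u d : ℕ) : Prop :=
  IsMinDist (Submodule.span F (Set.range a)) d ∧
  (∀ j, wt (a j) = u) ∧ wt (∑ j, a j) = d ∧ d * (k + 1) ≤ u * k

section Aux
variable {F : Type*} [Field F] {n k : ℕ}

/-- Block `q` (of size `n`) of a vector in `F^{(k+1)n}`. -/
def blk (n k : ℕ) (w : Fin ((k + 1) * n) → F) (q : Fin (k + 1)) : Fin n → F :=
  fun i => w ⟨q.val * n + i.val, by
    have h1 : q.val + 1 ≤ k + 1 := q.isLt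
    have hi := i.isLt
    calc q.val * n + i.val < (q.val + 1) * n := by rw [add_mul, one_mul]; omega
      _ ≤ (k + 1) * n := Nat.mul_le_mul_right n h1⟩

lemma wt_eq_zero_iff {m : ℕ} (v : Fin m → F) : wt v = 0 ↔ v = 0 := by
  classical
  constructor
  · intro h
    simp only [wt, Finset.card_eq_zero, Finset.filter_eq_empty_iff] at h
    funext p
    simpa using h (Finset.mem_univ p)
  · intro h; subst h; simp [wt]

lemma wt_smul {m : ℕ} (c : F) (hc : c ≠ 0) (v : Fin m → F) : wt (c • v) = wt v := by
  classical
  unfold wt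
  congr 1
  apply Finset.filter_congr
  intro p _
  simp [hc]

/-- The index-block equivalence. -/
def blkEquiv (n k : ℕ) (hn : 0 < n) : Fin (k + 1) × Fin n ≃ Fin ((k + 1) * n) where
  toFun x := ⟨x.1.val * n + x.2.val, by
    have h1 : x.1.val + 1 ≤ k + 1 := x.1.isLt
    have hi := x.2.isLt
    calc x.1.val * n + x.2.val < (x.1.val + 1) * n := by rw [add_mul, one_mul]; omega
      _ ≤ (k + 1) * n := Nat.mul_le_mul_right n h1⟩
  invFun p := (⟨p.val / n, Nat.div_lt_of_lt_mul (Nat.mul_comm (k + 1) n ▸ p.isLt)⟩,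
    ⟨p.val % n, Nat.mod_lt _ hn⟩)
  left_inv := by
    rintro ⟨q, i⟩
    have hi := i.isLt
    have h1 : (q.val * n + i.val) / n = q.val := by
      rw [mul_comm, Nat.mul_add_div hn, Nat.div_eq_of_lt hi, add_zero]
    have h2 : (q.val * n + i.val) % n = i.val := by
      rw [mul_comm, Nat.mul_add_mod, Nat.mod_eq_of_lt hi]
    simp only [Prod.mk.injEq]
    exact ⟨Fin.ext h1, Fin.ext h2⟩
  right_inv := by
    intro p
    apply Fin.ext
    show p.val / n * n + p.val % n = p.val
    rw [mul_comm]
    exact Nat.div_add_mod p.val n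

lemma wt_eq_sum_blk (hn : 0 < n) (w : Fin ((k + 1) * n) → F) :
    wt w = ∑ q : Fin (k + 1), wt (blk n k w q) := by
  classical
  unfold wt
  rw [Finset.card_filter, ← Equiv.sum_comp (blkEquiv n k hn)
    (fun p => if w p ≠ 0 then 1 else 0), Fintype.sum_prod_type]
  refine Finset.sum_congr rfl fun q _ => ?_
  rw [Finset.card_filter]
  rfl

lemma div_mod_of_blk (hn : 0 < n) (q : Fin (k + 1)) (i : Fin n) :
    (q.val * n + i.val) / n = q.val ∧ (q.val * n + i.val) % n = i.val := by
  constructor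
  · rw [mul_comm, Nat.mul_add_div hn, Nat.div_eq_of_lt i.isLt, add_zero]
  · rw [mul_comm, Nat.mul_add_mod, Nat.mod_eq_of_lt i.isLt]

lemma blk_shiftVec_self (hn : 0 < n) (a : Fin k → Fin n → F) (t : Fin (k + 1)) :
    blk n k (shiftVec n k a t) t = 0 := by
  funext i
  have h := div_mod_of_blk (k := k) hn t i
  show shiftVec n k a t _ = 0
  rw [shiftVec]
  rw [dif_pos h.1]

lemma sub_val (q : Fin (k + 1)) (j : Fin k) :
    (q - j.succ).val = if j.val + 1 ≤ q.val then q.val - (j.val + 1) else q.val + k - j.val := by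
  rw [Fin.sub_def]
  have hj : (j.succ : Fin (k + 1)).val = j.val + 1 := rfl
  simp only [hj]
  have hq := q.isLt
  have hjk := j.isLt
  have hA : k + 1 - (j.val + 1) + q.val < 2 * (k + 1) := by omega
  rcases lt_or_ge (k + 1 - (j.val + 1) + q.val) (k + 1) with h | h
  · rw [Nat.mod_eq_of_lt h]; split_ifs <;> omega
  · rw [Nat.mod_eq_sub_mod h, Nat.mod_eq_of_lt (by omega)]; split_ifs <;> omega

lemma sub_succ_ne (q : Fin (k + 1)) (j : Fin k) : (q - j.succ) ≠ q := by
  intro h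
  have h2 : j.succ = (0 : Fin (k + 1)) := by
    have := sub_eq_iff_eq_add.mp h
    have : q = q + j.succ := by rw [← this]
    have h3 := add_left_cancel (a := q) (b := (0 : Fin (k+1))) (c := j.succ)
      (by rw [add_zero, ← this])
    exact h3.symm
  have : (j.succ : Fin (k + 1)).val = j.val + 1 := rfl
  rw [h2] at this
  simp at this

lemma blk_shiftVec_sub (hn : 0 < n) (a : Fin k → Fin n → F) (q : Fin (k + 1)) (j : Fin k) :
    blk n k (shiftVec n k a (q - j.succ)) q = a j := by
  funext i
  have h := div_mod_of_blk (k := k) hn q i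
  have hlt : q.val * n + i.val < (k + 1) * n := by
    have h1 : q.val + 1 ≤ k + 1 := q.isLt
    have hi := i.isLt
    calc q.val * n + i.val < (q.val + 1) * n := by rw [add_mul, one_mul]; omega
      _ ≤ (k + 1) * n := Nat.mul_le_mul_right n h1
  show shiftVec n k a (q - j.succ) ⟨q.val * n + i.val, hlt⟩ = a j i
  rw [shiftVec]
  have hne : (⟨q.val * n + i.val, hlt⟩ : Fin ((k+1)*n)).val / n ≠ (q - j.succ).val := by
    show (q.val * n + i.val) / n ≠ (q - j.succ).val
    rw [h.1]
    intro hc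
    exact sub_succ_ne q j (Fin.ext hc.symm)
  rw [dif_neg hne]
  refine congr (congrArg a (Fin.ext ?_)) (Fin.ext ?_)
  · show (if (q - j.succ).val ≤ (q.val * n + i.val) / n then
        (q.val * n + i.val) / n - (q - j.succ).val
      else (q.val * n + i.val) / n + (k + 1) - (q - j.succ).val) - 1 = j.val
    rw [h.1, sub_val]
    have hq := q.isLt
    have hjk := j.isLt
    split_ifs <;> omega
  · exact h.2

lemma blk_sum (hn : 0 < n) (a : Fin k → Fin n → F) (c : Fin (k + 1) → F) (q : Fin (k + 1)) :
    blk n k (∑ t, c t • shiftVec n k a t) q = ∑ j : Fin k, c (q - j.succ) • a j := by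
  have h1 : blk n k (∑ t, c t • shiftVec n k a t) q
      = ∑ t, c t • blk n k (shiftVec n k a t) q := by
    funext i
    simp [blk, Finset.sum_apply]
  rw [h1, ← Equiv.sum_comp (Equiv.subLeft q)
    (fun t => c t • blk n k (shiftVec n k a t) q)]
  simp only [Equiv.subLeft_apply]
  rw [Fin.sum_univ_succ]
  rw [sub_zero, blk_shiftVec_self hn, smul_zero, zero_add]
  refine Finset.sum_congr rfl fun j _ => ?_
  rw [blk_shiftVec_sub hn]

lemma exists_sub_succ (hk : 0 < k) (q t : Fin (k + 1)) (ht : t ≠ q) :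
    ∃ j : Fin k, q - j.succ = t := by
  set s := q - t with hs
  have hs0 : s ≠ 0 := by
    intro h
    rw [hs] at h
    exact ht (sub_eq_zero.mp h).symm
  have hsv : 0 < s.val := Nat.pos_of_ne_zero (fun h => hs0 (Fin.ext h))
  have hsk : s.val < k + 1 := s.isLt
  refine ⟨⟨s.val - 1, by omega⟩, ?_⟩
  have hsucc : (Fin.succ (⟨s.val - 1, by omega⟩ : Fin k)) = s := by
    apply Fin.ext
    show s.val - 1 + 1 = s.val
    omega
  rw [hsucc, hs, sub_sub_cancel]

end Aux

theorem shiftVec_minDist (F : Type*) [Field F] (n k : ℕ)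
    (a : Fin k → Fin n → F) (ha : LinearIndependent F a) (u d : ℕ)
    (hb : UBounded a u d) :
    IsMinDist (Submodule.span F (Set.range (shiftVec n k a))) ((k + 1) * d) := by
  obtain ⟨⟨hmin, v, hvC, hv0, hvd⟩, hwta, hwtsum, hud⟩ := hb
  -- n and k are positive
  have hn : 0 < n := by
    rcases Nat.eq_zero_or_pos n with h | h
    · subst h
      exact absurd (funext fun i => i.elim0 : v = 0) hv0
    · exact h
  have hk : 0 < k := by
    rcases Nat.eq_zero_or_pos k with h | h
    · subst h
      rw [Set.range_eq_empty, Submodule.span_empty, Submodule.mem_bot] at hvC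
      exact absurd hvC hv0
    · exact h
  have hlin := Fintype.linearIndependent_iff.mp ha
  have hsum_ne : (∑ j, a j) ≠ 0 := by
    intro h
    have := hlin (fun _ => 1) (by simpa using h) ⟨0, hk⟩
    exact one_ne_zero this
  constructor
  · -- lower bound
    intro w hw hw0
    obtain ⟨c, hc⟩ := (Submodule.mem_span_range_iff_exists_fun F).mp hw
    have hcne : ∃ t, c t ≠ 0 := by
      by_contra h
      push_neg at h
      apply hw0
      rw [← hc]
      exact Finset.sum_eq_zero fun t _ => by rw [h t, zero_smul]
    have hblk : ∀ q, blk n k w q = ∑ j : Fin k, c (q - j.succ) • a j := by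
      intro q
      rw [← hc, blk_sum hn]
    have hwt : wt w = ∑ q : Fin (k + 1), wt (blk n k w q) := wt_eq_sum_blk hn w
    by_cases htwo : ∃ t₀ t₁, t₀ ≠ t₁ ∧ c t₀ ≠ 0 ∧ c t₁ ≠ 0
    · -- at least two nonzero coefficients: every block is nonzero
      obtain ⟨t₀, t₁, hne, h0, h1⟩ := htwo
      have hblk_ne : ∀ q, blk n k w q ≠ 0 := by
        intro q hq
        have hex : ∃ t, t ≠ q ∧ c t ≠ 0 := by
          rcases eq_or_ne t₀ q with rfl | h
          · exact ⟨t₁, fun h' => hne h'.symm, h1⟩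
          · exact ⟨t₀, h, h0⟩
        obtain ⟨t, htq, htc⟩ := hex
        obtain ⟨j, hj⟩ := exists_sub_succ hk q t htq
        have := hlin (fun j => c (q - j.succ)) (by rw [← hblk q, hq]) j
        rw [hj] at this
        exact htc this
      have hge : ∀ q, d ≤ wt (blk n k w q) := by
        intro q
        apply hmin _ _ (hblk_ne q)
        rw [hblk]
        exact Submodule.sum_mem _ fun j _ =>
          Submodule.smul_mem _ _ (Submodule.subset_span (Set.mem_range_self j))
      calc (k + 1) * d = ∑ _q : Fin (k + 1), d := by
            rw [Finset.sum_const, Finset.card_univ, Fintype.card_fin, smul_eq_mul]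
        _ ≤ ∑ q : Fin (k + 1), wt (blk n k w q) := Finset.sum_le_sum fun q _ => hge q
        _ = wt w := hwt.symm
    · -- exactly one nonzero coefficient
      push_neg at htwo
      obtain ⟨t₀, ht₀⟩ := hcne
      have honly : ∀ t, t ≠ t₀ → c t = 0 := by
        intro t ht
        by_contra hct
        exact ht₀ (htwo t t₀ ht hct)
      have hblk_u : ∀ q, q ≠ t₀ → wt (blk n k w q) = u := by
        intro q hq
        obtain ⟨j₀, hj₀⟩ := exists_sub_succ hk q t₀ (Ne.symm hq)
        have hbq : blk n k w q = c t₀ • a j₀ := by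
          rw [hblk]
          rw [Finset.sum_eq_single j₀]
          · rw [hj₀]
          · intro j _ hj
            have : q - j.succ ≠ t₀ := by
              intro h
              apply hj
              have h2 : q - j.succ = q - j₀.succ := by rw [h, hj₀]
              exact Fin.succ_injective _ (sub_right_injective h2)
            rw [honly _ this, zero_smul]
          · intro h
            exact absurd (Finset.mem_univ j₀) h
        rw [hbq, wt_smul _ ht₀, hwta]
      have hsub : (Finset.univ.erase t₀) ⊆ Finset.univ := Finset.subset_univ _
      have hkey : k * u ≤ wt w := by
        rw [hwt]
        calc k * u = ∑ q ∈ Finset.univ.erase t₀, u := by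
              rw [Finset.sum_const, Finset.card_erase_of_mem (Finset.mem_univ _),
                Finset.card_univ, Fintype.card_fin, smul_eq_mul]
              simp
          _ = ∑ q ∈ Finset.univ.erase t₀, wt (blk n k w q) :=
              Finset.sum_congr rfl fun q hq =>
                (hblk_u q (Finset.ne_of_mem_erase hq)).symm
          _ ≤ ∑ q : Fin (k + 1), wt (blk n k w q) :=
              Finset.sum_le_sum_of_subset hsub
      calc (k + 1) * d = d * (k + 1) := Nat.mul_comm _ _
        _ ≤ u * k := hud
        _ = k * u := Nat.mul_comm _ _
        _ ≤ wt w := hkey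
  · -- the witness: sum of all shift vectors
    refine ⟨∑ t, shiftVec n k a t, ?_, ?_, ?_⟩
    · exact Submodule.sum_mem _ fun t _ => Submodule.subset_span (Set.mem_range_self t)
    · intro h
      have h1 : (∑ t, shiftVec n k a t) = ∑ t, (1 : F) • shiftVec n k a t := by
        simp
      have h2 : blk n k (∑ t, shiftVec n k a t) 0 = ∑ j, a j := by
        rw [h1, blk_sum hn]
        simp
      apply hsum_ne
      rw [← h2, h]
      funext i
      rfl
    · have h1 : (∑ t, shiftVec n k a t) = ∑ t, (1 : F) • shiftVec n k a t := by
        simp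
      rw [wt_eq_sum_blk hn]
      have h2 : ∀ q, blk n k (∑ t, shiftVec n k a t) q = ∑ j, a j := by
        intro q
        rw [h1, blk_sum hn]
        simp
      calc ∑ q : Fin (k + 1), wt (blk n k (∑ t, shiftVec n k a t) q)
          = ∑ _q : Fin (k + 1), d := Finset.sum_congr rfl fun q _ => by rw [h2, hwtsum]
        _ = (k + 1) * d := by
            rw [Finset.sum_const, Finset.card_univ, Fintype.card_fin, smul_eq_mul]
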